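/- Combinatorial identity for level structures: fix integers 0 < r_1 < ... < r_k < r_{k+1} = r (set r_0 = 0), positive reals θ_1,...,θ_r, and define q(s) := Σ_{1 ≤ i ≤ s} θ_i·i + Σ_{s < i ≤ r} θ_i·s − (s/r)·Σ_{i=1}^r θ_i·i. Let F' ⊂ V be a subspace of a vector space V with a descending flag W_• of type dim W_j = r − r_j, set W̄_j := F' ∩ W_j, and c_i(F', W_•) := min{dim(F'/W̄_{j^+(i)}), dim(F'/W̄_{j_-(i)}) + i − i_-} with the index conventions j_-(i) = max{j : r_j < i}, j^+(i) = min{j : i ≤ r_j}, i_- = r_{j_-(i)}. Then Σ_{i=1}^r θ_i·( r·c_i(F', W_•) − dim(F')·i ) = r·Σ_{s ∈ {r_1,...,r_{k+1}}} [ q( s_- + dim(W̄_{j_-(s)}/W̄_{j^+(s)}) ) − q(s_-) ], where s_- = r_{j_-(s)}. -/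

import Mathlib

open Module Submodule

lemma aux_sum_m (D : ℕ → ℕ) (hD : Antitone D) (j : ℕ) :
    ∑ t ∈ Finset.range j, (D t - D (t+1)) = D 0 - D j := by
  induction j with
  | zero => simp
  | succ n ih =>
    rw [Finset.sum_range_succ, ih]
    have h1 : D (n+1) ≤ D n := hD (Nat.le_succ n)
    have h2 : D n ≤ D 0 := hD (Nat.zero_le n)
    omega

lemma aux_per_i (k : ℕ) (D R : ℕ → ℕ) (hD : Antitone D) (hR : Monotone R)
    (hDR : ∀ t, D t + R t ≤ D (t+1) + R (t+1))
    (x j : ℕ) (hjk : j ≤ k) (hx1 : R j < x) (hx2 : x ≤ R (j+1)) :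
    min (D 0 - D (j+1)) (D 0 - D j + x - R j)
      = ∑ t ∈ Finset.range (k+1), (min x (R t + (D t - D (t+1))) - min x (R t)) := by
  have hRm : ∀ t, R t + (D t - D (t+1)) ≤ R (t+1) := by
    intro t
    have h1 := hDR t
    have h2 : D (t+1) ≤ D t := hD (Nat.le_succ t)
    omega
  rw [Finset.range_eq_Ico, ← Finset.sum_Ico_consecutive _ (Nat.zero_le j) (by omega : j ≤ k+1)]
  have h1 : ∑ t ∈ Finset.Ico 0 j, (min x (R t + (D t - D (t+1))) - min x (R t)) = D 0 - D j := by
    rw [← Finset.range_eq_Ico, ← aux_sum_m D hD j]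
    refine Finset.sum_congr rfl fun t ht => ?_
    have ht' : t + 1 ≤ j := by simp only [Finset.mem_range] at ht; omega
    have h3 := hRm t
    have h4 := hR ht'
    omega
  have h2 : ∑ t ∈ Finset.Ico j (k+1), (min x (R t + (D t - D (t+1))) - min x (R t))
      = min x (R j + (D j - D (j+1))) - R j := by
    rw [Finset.sum_eq_single_of_mem j (Finset.mem_Ico.mpr ⟨le_refl j, by omega⟩)]
    · omega
    · intro t ht hne
      have htj : j + 1 ≤ t := by have := Finset.mem_Ico.mp ht; omega
      have hRt : x ≤ R t := le_trans hx2 (hR htj)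
      omega
  rw [h1, h2]
  have h5 : D (j+1) ≤ D j := hD (Nat.le_succ j)
  have h6 : D j ≤ D 0 := hD (Nat.zero_le j)
  omega

/-- The concave piecewise-linear function
`q(s) = ∑_{1 ≤ i ≤ s} θ_i·i + ∑_{s < i ≤ r} θ_i·s - (s/r)·∑_{i=1}^r θ_i·i`
(indices `i ∈ {1,…,r}` are modeled by `i : Fin r` via `i ↦ i+1`). -/
noncomputable def levelQ (r : ℕ) (θ : Fin r → ℝ) (s : ℕ) : ℝ :=
  (∑ i ∈ Finset.univ.filter (fun i : Fin r => (i : ℕ) + 1 ≤ s), θ i * ((i : ℕ) + 1))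
    + (∑ i ∈ Finset.univ.filter (fun i : Fin r => s < (i : ℕ) + 1), θ i * (s : ℝ))
    - ((s : ℝ) / (r : ℝ)) * ∑ i : Fin r, θ i * ((i : ℕ) + 1)

lemma levelQ_eq (r : ℕ) (θ : Fin r → ℝ) (s : ℕ) :
    levelQ r θ s = (∑ i : Fin r, θ i * ((min ((i:ℕ)+1) s : ℕ) : ℝ))
      - (s : ℝ)/(r:ℝ) * ∑ i : Fin r, θ i * ((i:ℕ)+1) := by
  unfold levelQ
  congr 1
  rw [← Finset.sum_filter_add_sum_filter_not Finset.univ (fun i : Fin r => (i:ℕ)+1 ≤ s)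
    (fun i => θ i * ((min ((i:ℕ)+1) s : ℕ) : ℝ))]
  congr 1
  · refine Finset.sum_congr rfl fun i hi => ?_
    have hi' : (i:ℕ)+1 ≤ s := (Finset.mem_filter.mp hi).2
    have : min ((i:ℕ)+1) s = (i:ℕ)+1 := by omega
    rw [this]; push_cast; ring
  · refine Finset.sum_congr ?_ fun i hi => ?_
    · ext i; simp [not_le]
    · have hi' : s < (i:ℕ)+1 := by
        have := (Finset.mem_filter.mp hi).2
        simpa [not_le] using this
      have : min ((i:ℕ)+1) s = s := by omega
      rw [this]

lemma levelQ_sub (r : ℕ) (θ : Fin r → ℝ) (a b : ℕ) :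
    levelQ r θ b - levelQ r θ a
      = (∑ i : Fin r, θ i * (((min ((i:ℕ)+1) b : ℕ) : ℝ) - ((min ((i:ℕ)+1) a : ℕ) : ℝ)))
        - ((b:ℝ) - (a:ℝ))/(r:ℝ) * ∑ i : Fin r, θ i * ((i:ℕ)+1) := by
  rw [levelQ_eq, levelQ_eq]
  have : ∑ i : Fin r, θ i * (((min ((i:ℕ)+1) b : ℕ) : ℝ) - ((min ((i:ℕ)+1) a : ℕ) : ℝ))
      = ∑ i : Fin r, θ i * ((min ((i:ℕ)+1) b : ℕ) : ℝ)
        - ∑ i : Fin r, θ i * ((min ((i:ℕ)+1) a : ℕ) : ℝ) := by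
    rw [← Finset.sum_sub_distrib]
    exact Finset.sum_congr rfl fun i _ => by ring
  rw [this]; ring

/-- Clamped embedding `ℕ → Fin (k+2)`. -/
def auxEm (k n : ℕ) : Fin (k+2) := ⟨min n (k+1), by omega⟩

/-- `ℕ`-indexed dimensions of `F' ⊓ W j`. -/
noncomputable def auxD {V : Type*} [AddCommGroup V] [Module ℂ V] (k : ℕ)
    (F' : Submodule ℂ V) (W : Fin (k+2) → Submodule ℂ V) (n : ℕ) : ℕ :=
  finrank ℂ ↥(F' ⊓ W (auxEm k n))

/-- `ℕ`-indexed version of `rseq`. -/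
def auxR (k : ℕ) (rseq : Fin (k+2) → ℕ) (n : ℕ) : ℕ := rseq (auxEm k n)

lemma auxEm_castSucc (k : ℕ) (t : Fin (k+1)) : auxEm k (t : ℕ) = t.castSucc := by
  apply Fin.ext
  have := t.isLt
  simp only [auxEm, Fin.val_mk, Fin.coe_castSucc]
  omega

lemma auxEm_succ (k : ℕ) (t : Fin (k+1)) : auxEm k ((t : ℕ)+1) = t.succ := by
  apply Fin.ext
  have := t.isLt
  simp only [auxEm, Fin.val_mk, Fin.val_succ]
  omega

lemma auxEm_zero (k : ℕ) : auxEm k 0 = 0 := by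
  apply Fin.ext
  simp [auxEm]

lemma auxEm_last (k : ℕ) : auxEm k (k+1) = Fin.last (k+1) := by
  apply Fin.ext
  simp [auxEm, Fin.last]

lemma auxEm_of_le (k : ℕ) (j : Fin (k+2)) (h : (j : ℕ) ≤ k+1) : auxEm k (j : ℕ) = j := by
  apply Fin.ext
  have := j.isLt
  simp only [auxEm, Fin.val_mk]
  omega

lemma auxEm_mono (k : ℕ) : Monotone (auxEm k) := fun a b hab => by
  simp only [auxEm, Fin.mk_le_mk]
  omega

lemma core (r k : ℕ) (hrpos : 0 < r) (θ : Fin r → ℝ)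
    (D R : ℕ → ℕ) (hD : Antitone D) (hR : Monotone R)
    (hDR : ∀ t, D t + R t ≤ D (t+1) + R (t+1))
    (hDlast : D (k+1) = 0)
    (ρ J : Fin r → ℕ)
    (hJ : ∀ i, J i ≤ k) (hρ : ∀ i, ρ i = R (J i))
    (hx1 : ∀ i : Fin r, R (J i) < (i:ℕ)+1) (hx2 : ∀ i : Fin r, (i:ℕ)+1 ≤ R (J i + 1))
    (A B : Fin r → ℕ)
    (hA : ∀ i, A i + D (J i + 1) = D 0) (hB : ∀ i, B i + D (J i) = D 0) :
    ∑ i : Fin r, θ i * ((r:ℝ) * min ((A i : ℝ)) ((B i:ℝ) + ((i:ℕ)+1) - (ρ i:ℝ))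
        - (D 0:ℝ) * ((i:ℕ)+1))
      = (r:ℝ) * ∑ n ∈ Finset.range (k+1),
          (levelQ r θ (R n + (D n - D (n+1))) - levelQ r θ (R n)) := by
  have hC : ∀ i : Fin r, min (A i) (B i + ((i:ℕ)+1) - ρ i)
      = ∑ n ∈ Finset.range (k+1),
          (min ((i:ℕ)+1) (R n + (D n - D (n+1))) - min ((i:ℕ)+1) (R n)) := by
    intro i
    rw [← aux_per_i k D R hD hR hDR ((i:ℕ)+1) (J i) (hJ i) (hx1 i) (hx2 i)]
    have h5 : D (J i + 1) ≤ D (J i) := hD (Nat.le_succ _)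
    have h6 : D (J i) ≤ D 0 := hD (Nat.zero_le _)
    have h7 := hA i; have h8 := hB i; have h9 := hρ i; have h10 := hx1 i
    omega
  have hCmin : ∀ i : Fin r, min ((A i:ℝ)) ((B i:ℝ) + (((i:ℕ):ℝ)+1) - (ρ i:ℝ))
      = ((min (A i) (B i + ((i:ℕ)+1) - ρ i) : ℕ) : ℝ) := by
    intro i
    have hρi : ρ i ≤ (i:ℕ)+1 := by have := hx1 i; have := hρ i; omega
    rw [Nat.cast_min]
    congr 1
    rw [Nat.cast_sub (by omega)]
    push_cast; ring
  have hCast : ∀ i : Fin r, ((min (A i) (B i + ((i:ℕ)+1) - ρ i) : ℕ) : ℝ)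
      = ∑ n ∈ Finset.range (k+1),
          (((min ((i:ℕ)+1) (R n + (D n - D (n+1))) : ℕ):ℝ)
            - ((min ((i:ℕ)+1) (R n) : ℕ):ℝ)) := by
    intro i
    rw [hC i, Nat.cast_sum]
    refine Finset.sum_congr rfl fun n _ => ?_
    rw [Nat.cast_sub (by omega)]
  have hrne : (r:ℝ) ≠ 0 := Nat.cast_ne_zero.mpr (by omega)
  have hQ : ∀ n, levelQ r θ (R n + (D n - D (n+1))) - levelQ r θ (R n)
      = (∑ i : Fin r, θ i * (((min ((i:ℕ)+1) (R n + (D n - D (n+1))) : ℕ):ℝ)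
            - ((min ((i:ℕ)+1) (R n) : ℕ):ℝ)))
        - ((D n - D (n+1) : ℕ):ℝ)/(r:ℝ) * ∑ i : Fin r, θ i * ((i:ℕ)+1) := by
    intro n
    rw [levelQ_sub]
    congr 1
    push_cast
    ring
  rw [Finset.sum_congr rfl (fun n _ => hQ n), Finset.sum_sub_distrib]
  have hsm : ∑ n ∈ Finset.range (k+1), ((D n - D (n+1) : ℕ):ℝ)/(r:ℝ)
        * ∑ i : Fin r, θ i * ((i:ℕ)+1)
      = (D 0 : ℝ)/(r:ℝ) * ∑ i : Fin r, θ i * ((i:ℕ)+1) := by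
    rw [← Finset.sum_mul, ← Finset.sum_div, ← Nat.cast_sum, aux_sum_m D hD (k+1), hDlast,
      Nat.sub_zero]
  rw [hsm, Finset.sum_comm, mul_sub]
  have hLi : ∀ i : Fin r, θ i * ((r:ℝ) * min ((A i:ℝ)) ((B i:ℝ) + (((i:ℕ):ℝ)+1) - (ρ i:ℝ))
        - (D 0:ℝ)*(((i:ℕ):ℝ)+1))
      = (r:ℝ) * (∑ n ∈ Finset.range (k+1), θ i
          * (((min ((i:ℕ)+1) (R n + (D n - D (n+1))) : ℕ):ℝ)
            - ((min ((i:ℕ)+1) (R n) : ℕ):ℝ)))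
        - (D 0:ℝ) * (θ i * (((i:ℕ):ℝ)+1)) := by
    intro i
    rw [hCmin i, hCast i, ← Finset.mul_sum]
    ring
  rw [Finset.sum_congr rfl (fun i _ => hLi i), Finset.sum_sub_distrib, ← Finset.mul_sum,
    ← Finset.mul_sum]
  congr 1
  field_simp

/-- Combinatorial identity for level structures.  For a subspace
`F' ⊆ V` with `W̄_j = F' ∩ W_j` (where `W_•` is a descending flag of type
`dim W_j = r - r_j`, `0 = r_0 < r_1 < ⋯ < r_{k+1} = r`) and
`c_i(F', W_•) = min{dim(F'/W̄_{j^+(i)}), dim(F'/W̄_{j_-(i)}) + i - i_-}`, one has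
`∑_{i=1}^r θ_i (r·c_i(F',W_•) - dim F'·i)
  = r·∑_{s ∈ {r_1,…,r_{k+1}}} [q(s_- + dim(W̄_{j_-(s)}/W̄_{j^+(s)})) - q(s_-)]`. -/
theorem level_structure_combinatorial_identity
    {V : Type*} [AddCommGroup V] [Module ℂ V] [FiniteDimensional ℂ V]
    (r k : ℕ) (hrV : finrank ℂ V = r)
    (θ : Fin r → ℝ) (hθ : ∀ i, 0 < θ i)
    (rseq : Fin (k + 2) → ℕ) (hrseq : StrictMono rseq)
    (hr0 : rseq 0 = 0) (hrlast : rseq (Fin.last (k + 1)) = r)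
    (W : Fin (k + 2) → Submodule ℂ V) (hWanti : StrictAnti W)
    (hW0 : W 0 = ⊤) (hWlast : W (Fin.last (k + 1)) = ⊥)
    (hWdim : ∀ j, finrank ℂ (W j) = r - rseq j)
    (jm jp : Fin r → Fin (k + 2))
    (hjm : ∀ i : Fin r, rseq (jm i) < (i : ℕ) + 1 ∧
      ∀ j, rseq j < (i : ℕ) + 1 → j ≤ jm i)
    (hjp : ∀ i : Fin r, (i : ℕ) + 1 ≤ rseq (jp i) ∧
      ∀ j, (i : ℕ) + 1 ≤ rseq j → jp i ≤ j)
    (F' : Submodule ℂ V) :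
    ∑ i : Fin r, θ i *
        ((r : ℝ) * (min (finrank ℂ (F'.map (W (jp i)).mkQ))
            (finrank ℂ (F'.map (W (jm i)).mkQ) + ((i : ℕ) + 1) - rseq (jm i)) : ℝ) -
          (finrank ℂ F' : ℝ) * ((i : ℕ) + 1)) =
      (r : ℝ) * ∑ t : Fin (k + 1),
        (levelQ r θ (rseq t.castSucc +
            (finrank ℂ (F' ⊓ W t.castSucc : Submodule ℂ V) -
              finrank ℂ (F' ⊓ W t.succ : Submodule ℂ V))) -
          levelQ r θ (rseq t.castSucc)) := by
  classical
  have hrpos : 0 < r := by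
    have h0l : (0 : Fin (k+2)) < Fin.last (k+1) := by
      rw [Fin.lt_def]; simp [Fin.last]
    have := hrseq h0l
    rw [hr0, hrlast] at this
    omega
  have hrle : ∀ j, rseq j ≤ r := fun j => by
    have := hrseq.monotone (Fin.le_last j); rwa [hrlast] at this
  have L1 : ∀ j, finrank ℂ (F'.map (W j).mkQ) + finrank ℂ ↥(F' ⊓ W j) = finrank ℂ F' := by
    intro j
    have h := LinearMap.finrank_range_add_finrank_ker ((W j).mkQ ∘ₗ F'.subtype)
    rw [LinearMap.range_comp, Submodule.range_subtype, LinearMap.ker_comp,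
      Submodule.ker_mkQ] at h
    rwa [← Submodule.finrank_map_subtype_eq F' (Submodule.comap F'.subtype (W j)),
      Submodule.map_comap_subtype] at h
  have hD : Antitone (auxD k F' W) := fun a b hab =>
    Submodule.finrank_mono (inf_le_inf_left F' (hWanti.antitone (auxEm_mono k hab)))
  have hR : Monotone (auxR k rseq) := fun a b hab => hrseq.monotone (auxEm_mono k hab)
  have hDlast : auxD k F' W (k+1) = 0 := by
    show finrank ℂ ↥(F' ⊓ W (auxEm k (k+1))) = 0
    rw [auxEm_last, hWlast, inf_bot_eq, finrank_bot]
  have hD0 : auxD k F' W 0 = finrank ℂ F' := by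
    show finrank ℂ ↥(F' ⊓ W (auxEm k 0)) = _
    rw [auxEm_zero, hW0, inf_top_eq]
  have hDR : ∀ t, auxD k F' W t + auxR k rseq t ≤ auxD k F' W (t+1) + auxR k rseq (t+1) := by
    intro t
    rcases le_or_gt t k with h | h
    · have hlt : auxEm k t < auxEm k (t+1) := by
        rw [Fin.lt_def]
        simp only [auxEm, Fin.val_mk]
        omega
      have hWle : W (auxEm k (t+1)) ≤ W (auxEm k t) := hWanti.antitone hlt.le
      have hh := Submodule.finrank_sup_add_finrank_inf_eq (F' ⊓ W (auxEm k t))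
        (W (auxEm k (t+1)))
      have hinf : (F' ⊓ W (auxEm k t)) ⊓ W (auxEm k (t+1)) = F' ⊓ W (auxEm k (t+1)) := by
        rw [inf_assoc, inf_eq_right.mpr hWle]
      have hsup : finrank ℂ ↥((F' ⊓ W (auxEm k t)) ⊔ W (auxEm k (t+1)))
          ≤ finrank ℂ ↥(W (auxEm k t)) :=
        Submodule.finrank_mono (sup_le inf_le_right hWle)
      rw [hinf] at hh
      have e1 := hWdim (auxEm k t)
      have e2 := hWdim (auxEm k (t+1))
      have r1 := hrle (auxEm k t)
      have r2 := hrle (auxEm k (t+1))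
      have hrr : rseq (auxEm k t) < rseq (auxEm k (t+1)) := hrseq hlt
      show finrank ℂ ↥(F' ⊓ W (auxEm k t)) + rseq (auxEm k t)
        ≤ finrank ℂ ↥(F' ⊓ W (auxEm k (t+1))) + rseq (auxEm k (t+1))
      omega
    · have he : auxEm k t = auxEm k (t+1) := by
        apply Fin.ext
        simp only [auxEm, Fin.val_mk]
        omega
      show finrank ℂ ↥(F' ⊓ W (auxEm k t)) + rseq (auxEm k t)
        ≤ finrank ℂ ↥(F' ⊓ W (auxEm k (t+1))) + rseq (auxEm k (t+1))
      rw [he]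
  have hji : ∀ i : Fin r, (jm i : ℕ) ≤ k ∧ (jp i : ℕ) = (jm i : ℕ) + 1 := by
    intro i
    obtain ⟨h1, h2⟩ := hjm i
    obtain ⟨h3, h4⟩ := hjp i
    have hile : (i:ℕ) + 1 ≤ r := i.isLt
    have hk1 : (jm i : ℕ) ≤ k := by
      by_contra hcon
      have hlast : jm i = Fin.last (k+1) := by
        apply Fin.ext
        have := (jm i).isLt
        simp only [Fin.val_last]
        omega
      rw [hlast, hrlast] at h1
      omega
    have hJ' : (i:ℕ)+1 ≤ rseq (⟨(jm i : ℕ) + 1, by omega⟩ : Fin (k+2)) := by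
      by_contra hcon
      have hle := h2 _ (not_le.mp hcon)
      rw [Fin.le_def] at hle
      simp only [Fin.val_mk] at hle
      omega
    have hup : jp i ≤ (⟨(jm i : ℕ) + 1, by omega⟩ : Fin (k+2)) := h4 _ hJ'
    have hlow : jm i < jp i := hrseq.lt_iff_lt.mp (lt_of_lt_of_le h1 h3)
    rw [Fin.lt_def] at hlow
    rw [Fin.le_def] at hup
    simp only [Fin.val_mk] at hup
    exact ⟨hk1, by omega⟩
  have hJ : ∀ i : Fin r, (jm i : ℕ) ≤ k := fun i => (hji i).1
  have hρ : ∀ i : Fin r, rseq (jm i) = auxR k rseq (jm i : ℕ) := by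
    intro i
    show rseq (jm i) = rseq (auxEm k (jm i : ℕ))
    rw [auxEm_of_le k (jm i) (by have := (hji i).1; omega)]
  have hx1 : ∀ i : Fin r, auxR k rseq (jm i : ℕ) < (i:ℕ)+1 := by
    intro i
    show rseq (auxEm k (jm i : ℕ)) < _
    rw [auxEm_of_le k (jm i) (by have := (hji i).1; omega)]
    exact (hjm i).1
  have hx2 : ∀ i : Fin r, (i:ℕ)+1 ≤ auxR k rseq ((jm i : ℕ) + 1) := by
    intro i
    show (i:ℕ)+1 ≤ rseq (auxEm k ((jm i : ℕ)+1))
    rw [← (hji i).2, auxEm_of_le k (jp i) (by have := (jp i).isLt; omega)]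
    exact (hjp i).1
  have hA : ∀ i : Fin r, finrank ℂ (F'.map (W (jp i)).mkQ) + auxD k F' W ((jm i : ℕ)+1)
      = auxD k F' W 0 := by
    intro i
    rw [hD0]
    show finrank ℂ (F'.map (W (jp i)).mkQ) + finrank ℂ ↥(F' ⊓ W (auxEm k ((jm i : ℕ)+1))) = _
    rw [← (hji i).2, auxEm_of_le k (jp i) (by have := (jp i).isLt; omega)]
    exact L1 (jp i)
  have hB : ∀ i : Fin r, finrank ℂ (F'.map (W (jm i)).mkQ) + auxD k F' W (jm i : ℕ)
      = auxD k F' W 0 := by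
    intro i
    rw [hD0]
    show finrank ℂ (F'.map (W (jm i)).mkQ) + finrank ℂ ↥(F' ⊓ W (auxEm k (jm i : ℕ))) = _
    rw [auxEm_of_le k (jm i) (by have := (hji i).1; omega)]
    exact L1 (jm i)
  have hRHS : ∑ t : Fin (k+1),
        (levelQ r θ (rseq t.castSucc +
            (finrank ℂ (F' ⊓ W t.castSucc : Submodule ℂ V) -
              finrank ℂ (F' ⊓ W t.succ : Submodule ℂ V))) -
          levelQ r θ (rseq t.castSucc))
      = ∑ n ∈ Finset.range (k+1),
          (levelQ r θ (auxR k rseq n + (auxD k F' W n - auxD k F' W (n+1)))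
            - levelQ r θ (auxR k rseq n)) := by
    rw [← Fin.sum_univ_eq_sum_range
      (fun n => levelQ r θ (auxR k rseq n + (auxD k F' W n - auxD k F' W (n+1)))
        - levelQ r θ (auxR k rseq n)) (k+1)]
    refine Finset.sum_congr rfl fun t _ => ?_
    have e1 := auxEm_castSucc k t
    have e2 := auxEm_succ k t
    have d1 : auxD k F' W (t : ℕ) = finrank ℂ ↥(F' ⊓ W t.castSucc) :=
      congrArg (fun j => finrank ℂ ↥(F' ⊓ W j)) e1
    have d2 : auxD k F' W ((t : ℕ)+1) = finrank ℂ ↥(F' ⊓ W t.succ) :=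
      congrArg (fun j => finrank ℂ ↥(F' ⊓ W j)) e2
    have r1 : auxR k rseq (t : ℕ) = rseq t.castSucc := congrArg rseq e1
    show levelQ r θ (rseq t.castSucc +
        (finrank ℂ ↥(F' ⊓ W t.castSucc) - finrank ℂ ↥(F' ⊓ W t.succ))) -
          levelQ r θ (rseq t.castSucc)
      = levelQ r θ (auxR k rseq (t : ℕ) + (auxD k F' W (t : ℕ) - auxD k F' W ((t : ℕ)+1)))
          - levelQ r θ (auxR k rseq (t : ℕ))
    rw [d1, d2, r1]
  rw [hRHS, show (finrank ℂ F' : ℝ) = ((auxD k F' W 0 : ℕ) : ℝ) from by rw [hD0]]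
  exact core r k hrpos θ (auxD k F' W) (auxR k rseq) hD hR hDR hDlast
    (fun i => rseq (jm i)) (fun i => (jm i : ℕ)) hJ hρ hx1 hx2
    (fun i => finrank ℂ (F'.map (W (jp i)).mkQ))
    (fun i => finrank ℂ (F'.map (W (jm i)).mkQ)) hA hB
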